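/- arXiv:2503.21110 — 2 statements merged into one kernel-verified Lean document; each statement's English description precedes it below -/
import Mathlib

section
/- Let (Ω, ℙ) be a probability space, N a positive integer, D > 0, and let φ₁, …, φ_N : Ω → ℝ be independent random variables, each uniformly distributed on [0, D]. Let Δω ≥ 2π/D and define the complex random variable Q₀ = (1/N)·Σ_{n=1}^N exp(i·Δω·φₙ). For t > 0 set t₁ = max{ |t + sin(Δω·D)/(Δω·D)| , |−t + sin(Δω·D)/(Δω·D)| } and t₂ = |t + (1 − cos(Δω·D))/(Δω·D)|. Then ℙ( |Q₀| ≥ √(t₁² + t₂²) ) ≤ 4·exp(−N·t²/2). -/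
open MeasureTheory ProbabilityTheory
open Real

lemma log_key (q : ℝ) (hq0 : 0 ≤ q) (hq1 : q ≤ 1) (h : ℝ) :
    Real.log (1 - q + q * Real.exp h) ≤ q * h + h ^ 2 / 8 := by
  set d : ℝ → ℝ := fun x => 1 - q + q * Real.exp x with hd_def
  have hd : ∀ x, 0 < d x := by
    intro x
    rcases eq_or_lt_of_le hq0 with h0 | h0
    · simp [hd_def, ← h0]
    · have h1 : 0 < q * Real.exp x := mul_pos h0 (Real.exp_pos x)
      have h2 : 0 ≤ 1 - q := by linarith
      simp only [hd_def]; linarith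
  set g : ℝ → ℝ := fun x => q * Real.exp x / d x - q with hg_def
  set f : ℝ → ℝ := fun x => Real.log (d x) - q * x with hf_def
  have hdd : ∀ x, HasDerivAt d (q * Real.exp x) x := by
    intro x
    exact ((Real.hasDerivAt_exp x).const_mul q).const_add (1 - q)
  have hfd : ∀ x, HasDerivAt f (g x) x := by
    intro x
    have h1 : HasDerivAt (fun x => Real.log (d x)) (q * Real.exp x / d x) x :=
      (hdd x).log (hd x).ne'
    exact h1.sub (by simpa using (hasDerivAt_id x).const_mul q)
  set g' : ℝ → ℝ :=
    fun x => (q * Real.exp x * d x - q * Real.exp x * (q * Real.exp x)) / d x ^ 2 with hg'_def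
  have hgd : ∀ x, HasDerivAt g (g' x) x := by
    intro x
    have hnum : HasDerivAt (fun x => q * Real.exp x) (q * Real.exp x) x :=
      (Real.hasDerivAt_exp x).const_mul q
    simpa [hg_def, hg'_def] using (hnum.div (hdd x) (hd x).ne').sub_const q
  have hg'le : ∀ x, g' x ≤ 1 / 4 := by
    intro x
    rw [hg'_def]
    rw [div_le_iff₀ (pow_pos (hd x) 2)]
    have h2 := hd x
    generalize d x = a at *
    nlinarith [sq_nonneg (a - 2 * (q * Real.exp x))]
  have hGd : ∀ x, HasDerivAt (fun x => x / 4 - g x) (1 / 4 - g' x) x := by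
    intro x
    exact (hasDerivAt_id' x |>.div_const 4 |>.congr_deriv (by norm_num)).sub (hgd x)
  have hG : Monotone (fun x => x / 4 - g x) := by
    apply monotone_of_deriv_nonneg
    · exact fun x => (hGd x).differentiableAt
    · intro x
      rw [(hGd x).deriv]
      linarith [hg'le x]
  have hg0 : g 0 = 0 := by simp [hg_def, hd_def]
  have hgle : ∀ x, 0 ≤ x → g x ≤ x / 4 := by
    intro x hx
    have := hG hx
    simp only [hg0] at this; linarith
  have hgge : ∀ x, x ≤ 0 → x / 4 ≤ g x := by
    intro x hx
    have := hG hx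
    simp only [hg0] at this; linarith
  have hFd : ∀ x, HasDerivAt (fun x => x ^ 2 / 8 - f x) (x / 4 - g x) x := by
    intro x
    have h1 := (hasDerivAt_pow 2 x).div_const 8
    have h1' : HasDerivAt (fun x : ℝ => x ^ 2 / 8) (x / 4) x := by
      convert h1 using 1
      · rfl
      · rfl
      · push_cast
        ring
    exact h1'.sub (hfd x)
  have hF0 : (fun x : ℝ => x ^ 2 / 8 - f x) 0 = 0 := by simp [hf_def, hd_def]
  have hcont : Continuous (fun x : ℝ => x ^ 2 / 8 - f x) :=
    Differentiable.continuous (fun y => (hFd y).differentiableAt)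
  have key : ∀ x, 0 ≤ x ^ 2 / 8 - f x := by
    intro x
    rcases le_total 0 x with hx | hx
    · have hmono : MonotoneOn (fun x : ℝ => x ^ 2 / 8 - f x) (Set.Ici 0) := by
        apply monotoneOn_of_deriv_nonneg (convex_Ici 0) hcont.continuousOn
        · exact fun y _ => (hFd y).differentiableAt.differentiableWithinAt
        · intro y hy
          rw [(hFd y).deriv]
          have := hgle y (le_of_lt (by simpa using hy))
          linarith
      have := hmono Set.self_mem_Ici (Set.mem_Ici.mpr hx) hx
      rw [hF0] at this; exact this
    · have hmono : AntitoneOn (fun x : ℝ => x ^ 2 / 8 - f x) (Set.Iic 0) := by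
        apply antitoneOn_of_deriv_nonpos (convex_Iic 0) hcont.continuousOn
        · exact fun y _ => (hFd y).differentiableAt.differentiableWithinAt
        · intro y hy
          rw [(hFd y).deriv]
          have := hgge y (le_of_lt (by simpa using hy))
          linarith
      have := hmono (Set.mem_Iic.mpr hx) Set.self_mem_Iic hx
      rw [hF0] at this; exact this
  have := key h
  simp only [hf_def, hd_def] at this
  linarith

lemma mgf_bound {Ω : Type*} [MeasurableSpace Ω] (P : Measure Ω) [IsProbabilityMeasure P]
    (X : Ω → ℝ) (hX : Measurable X) (hb : ∀ ω, X ω ∈ Set.Icc (-1:ℝ) 1) (s : ℝ) :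
    mgf X P s ≤ Real.exp (s * (∫ ω, X ω ∂P) + s ^ 2 / 2) := by
  have hXint : Integrable X P := by
    refine ⟨hX.aestronglyMeasurable, ?_⟩
    apply HasFiniteIntegral.of_bounded (C := 1)
    filter_upwards with ω
    rw [Real.norm_eq_abs, abs_le]
    exact ⟨(hb ω).1, (hb ω).2⟩
  have hexpint : Integrable (fun ω => Real.exp (s * X ω)) P := by
    refine ⟨((hX.const_mul s).exp).aestronglyMeasurable, ?_⟩
    apply HasFiniteIntegral.of_bounded (C := Real.exp |s|)
    filter_upwards with ω
    rw [Real.norm_eq_abs, abs_of_pos (Real.exp_pos _), Real.exp_le_exp]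
    calc s * X ω ≤ |s * X ω| := le_abs_self _
      _ = |s| * |X ω| := abs_mul s (X ω)
      _ ≤ |s| * 1 := by
          apply mul_le_mul_of_nonneg_left _ (abs_nonneg s)
          rw [abs_le]; exact ⟨(hb ω).1, (hb ω).2⟩
      _ = |s| := mul_one _
  set m : ℝ := ∫ ω, X ω ∂P with hm_def
  have hm : m ∈ Set.Icc (-1:ℝ) 1 := by
    constructor
    · have : ∫ ω, (-1 : ℝ) ∂P ≤ m := integral_mono (integrable_const _) hXint (fun ω => (hb ω).1)
      simpa using this
    · have : m ≤ ∫ ω, (1 : ℝ) ∂P := integral_mono hXint (integrable_const _) (fun ω => (hb ω).2)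
      simpa using this
  have hpt : ∀ ω, Real.exp (s * X ω) ≤
      (1 - X ω) / 2 * Real.exp (-s) + (1 + X ω) / 2 * Real.exp s := by
    intro ω
    have ha : (0:ℝ) ≤ (1 - X ω) / 2 := by linarith [(hb ω).2]
    have hb' : (0:ℝ) ≤ (1 + X ω) / 2 := by linarith [(hb ω).1]
    have hab : (1 - X ω) / 2 + (1 + X ω) / 2 = 1 := by ring
    have := convexOn_exp.2 (Set.mem_univ (-s)) (Set.mem_univ s) ha hb' hab
    simp only [smul_eq_mul] at this
    convert this using 2
    · rfl
    · ring
  have hint : mgf X P s ≤ (1 - m) / 2 * Real.exp (-s) + (1 + m) / 2 * Real.exp s := by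
    rw [mgf]
    calc ∫ ω, Real.exp (s * X ω) ∂P
        ≤ ∫ ω, ((1 - X ω) / 2 * Real.exp (-s) + (1 + X ω) / 2 * Real.exp s) ∂P := by
          apply integral_mono hexpint ?_ hpt
          have hrw : (fun ω => (1 - X ω) / 2 * Real.exp (-s) + (1 + X ω) / 2 * Real.exp s)
              = fun ω => (Real.exp (-s) + Real.exp s) / 2
                  + (Real.exp s - Real.exp (-s)) / 2 * X ω := by
            funext ω; ring
          rw [hrw]
          exact (integrable_const _).add (hXint.const_mul _)
      _ = (1 - m) / 2 * Real.exp (-s) + (1 + m) / 2 * Real.exp s := by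
          have hrw : (fun ω => (1 - X ω) / 2 * Real.exp (-s) + (1 + X ω) / 2 * Real.exp s)
              = fun ω => (Real.exp (-s) + Real.exp s) / 2
                  + (Real.exp s - Real.exp (-s)) / 2 * X ω := by
            funext ω; ring
          rw [hrw, integral_add (integrable_const _) (hXint.const_mul _), integral_const,
            integral_const_mul]
          simp only [probReal_univ, measure_univ, ENNReal.toReal_one, one_smul, ← hm_def]
          ring
  refine hint.trans ?_
  set q : ℝ := (1 + m) / 2 with hq_def
  have hq0 : 0 ≤ q := by rw [hq_def]; linarith [hm.1]
  have hq1 : q ≤ 1 := by rw [hq_def]; linarith [hm.2]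
  have key := log_key q hq0 hq1 (2 * s)
  have hpos : (0:ℝ) < 1 - q + q * Real.exp (2 * s) := by
    rcases eq_or_lt_of_le hq0 with h0 | h0
    · simp [← h0]
    · nlinarith [Real.exp_pos (2 * s), mul_pos h0 (Real.exp_pos (2 * s))]
  have h2 : 1 - q + q * Real.exp (2 * s) ≤ Real.exp (q * (2 * s) + (2 * s) ^ 2 / 8) := by
    rw [← Real.exp_log hpos]
    exact Real.exp_le_exp.mpr key
  have heq : (1 - m) / 2 * Real.exp (-s) + (1 + m) / 2 * Real.exp s
      = Real.exp (-s) * (1 - q + q * Real.exp (2 * s)) := by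
    rw [hq_def]
    have : Real.exp s = Real.exp (-s) * Real.exp (2 * s) := by
      rw [← Real.exp_add]; ring_nf
    rw [this]; ring
  rw [heq]
  calc Real.exp (-s) * (1 - q + q * Real.exp (2 * s))
      ≤ Real.exp (-s) * Real.exp (q * (2 * s) + (2 * s) ^ 2 / 8) := by
        apply mul_le_mul_of_nonneg_left h2 (Real.exp_pos _).le
    _ = Real.exp (-s + (q * (2 * s) + (2 * s) ^ 2 / 8)) := by rw [← Real.exp_add]
    _ = Real.exp (s * m + s ^ 2 / 2) := by
        congr 1
        rw [hq_def]; ring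

lemma integrable_exp_mul_of_bounded {Ω : Type*} [MeasurableSpace Ω] (P : Measure Ω)
    [IsProbabilityMeasure P] (X : Ω → ℝ) (hX : Measurable X)
    (hb : ∀ ω, X ω ∈ Set.Icc (-1:ℝ) 1) (s : ℝ) :
    Integrable (fun ω => Real.exp (s * X ω)) P := by
  refine ⟨((hX.const_mul s).exp).aestronglyMeasurable, ?_⟩
  apply HasFiniteIntegral.of_bounded (C := Real.exp |s|)
  filter_upwards with ω
  rw [Real.norm_eq_abs, abs_of_pos (Real.exp_pos _), Real.exp_le_exp]
  calc s * X ω ≤ |s * X ω| := le_abs_self _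
    _ = |s| * |X ω| := abs_mul s (X ω)
    _ ≤ |s| * 1 := by
        apply mul_le_mul_of_nonneg_left _ (abs_nonneg s)
        rw [abs_le]; exact ⟨(hb ω).1, (hb ω).2⟩
    _ = |s| := mul_one _

lemma hoeffding_tail {Ω : Type*} [MeasurableSpace Ω] (P : Measure Ω) [IsProbabilityMeasure P]
    (N : ℕ) (X : Fin N → Ω → ℝ) (hX : ∀ n, Measurable (X n))
    (hb : ∀ n ω, X n ω ∈ Set.Icc (-1:ℝ) 1)
    (hindep : iIndepFun X P)
    (t ε : ℝ) (ht : 0 < t) (hε : (∑ n, ∫ ω, X n ω ∂P) + N * t ≤ ε) :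
    P {ω | ε ≤ (∑ n, X n) ω} ≤ ENNReal.ofReal (Real.exp (-((N:ℝ) * t ^ 2) / 2)) := by
  have hint : ∀ n ∈ Finset.univ, Integrable (fun ω => Real.exp (t * X n ω)) P :=
    fun n _ => integrable_exp_mul_of_bounded P (X n) (hX n) (hb n) t
  have hsumint := hindep.integrable_exp_mul_sum (t := t) hX hint
  have hChernoff := measure_ge_le_exp_mul_mgf (μ := P) (X := ∑ n, X n) ε ht.le hsumint
  have hmgf : mgf (∑ n, X n) P t ≤ Real.exp (t * (∑ n, ∫ ω, X n ω ∂P) + N * t ^ 2 / 2) := by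
    rw [hindep.mgf_sum hX Finset.univ]
    calc ∏ n, mgf (X n) P t
        ≤ ∏ n, Real.exp (t * (∫ ω, X n ω ∂P) + t ^ 2 / 2) := by
          apply Finset.prod_le_prod (fun n _ => mgf_nonneg)
          exact fun n _ => mgf_bound P (X n) (hX n) (hb n) t
      _ = Real.exp (∑ n, (t * (∫ ω, X n ω ∂P) + t ^ 2 / 2)) := (Real.exp_sum _ _).symm
      _ = Real.exp (t * (∑ n, ∫ ω, X n ω ∂P) + N * t ^ 2 / 2) := by
          rw [Finset.sum_add_distrib, Finset.mul_sum]
          simp [Finset.sum_const, Finset.card_univ]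
          ring
  rw [ENNReal.le_ofReal_iff_toReal_le (measure_ne_top P _) (Real.exp_pos _).le]
  calc (P {ω | ε ≤ (∑ n, X n) ω}).toReal
      ≤ Real.exp (-t * ε) * mgf (∑ n, X n) P t := hChernoff
    _ ≤ Real.exp (-t * ε) * Real.exp (t * (∑ n, ∫ ω, X n ω ∂P) + N * t ^ 2 / 2) := by
        apply mul_le_mul_of_nonneg_left hmgf (Real.exp_pos _).le
    _ = Real.exp (-t * ε + (t * (∑ n, ∫ ω, X n ω ∂P) + N * t ^ 2 / 2)) := (Real.exp_add _ _).symm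
    _ ≤ Real.exp (-((N:ℝ) * t ^ 2) / 2) := by
        rw [Real.exp_le_exp]
        nlinarith [mul_le_mul_of_nonneg_left hε ht.le]

lemma unif_integral {Ω : Type*} [MeasurableSpace Ω] (P : Measure Ω) [IsProbabilityMeasure P]
    (D : ℝ) (hD : 0 < D) (φ : Ω → ℝ) (hφ : Measurable φ)
    (hunif : Measure.map φ P = ENNReal.ofReal (1 / D) • volume.restrict (Set.Icc (0:ℝ) D))
    (g : ℝ → ℝ) (hg : Measurable g) :
    ∫ ω, g (φ ω) ∂P = (1 / D) * ∫ x in (0:ℝ)..D, g x := by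
  rw [← integral_map hφ.aemeasurable hg.aestronglyMeasurable, hunif, integral_smul_measure,
    ENNReal.toReal_ofReal (by positivity), intervalIntegral.integral_of_le hD.le,
    ← integral_Icc_eq_integral_Ioc]
  simp [smul_eq_mul]

/-- Lemma 2.1 of the paper: if `φ₁, …, φ_N` are i.i.d. uniform on `[0, D]` and
`Δω ≥ 2π/D`, then the empirical quantity `Q₀ = (1/N)·Σₙ exp(i·Δω·φₙ)` satisfies
`P(|Q₀| ≥ √(t₁² + t₂²)) ≤ 4·exp(−N·t²/2)` for every `t > 0`, where
`t₁ = max |±t + sin(Δω·D)/(Δω·D)|` and `t₂ = |t + (1 − cos(Δω·D))/(Δω·D)|`. -/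
theorem Q0_concentration
    {Ω : Type*} [MeasurableSpace Ω] (P : Measure Ω) [IsProbabilityMeasure P]
    (N : ℕ) (hN : 0 < N) (D : ℝ) (hD : 0 < D)
    (φ : Fin N → Ω → ℝ) (hmeas : ∀ n, Measurable (φ n))
    (hindep : iIndepFun φ P)
    (hunif : ∀ n, Measure.map (φ n) P =
      ENNReal.ofReal (1 / D) • volume.restrict (Set.Icc (0:ℝ) D))
    (Δω : ℝ) (hΔω : 2 * Real.pi / D ≤ Δω)
    (Q₀ : Ω → ℂ)
    (hQ₀ : ∀ ω, Q₀ ω = (1 / (N:ℂ)) * ∑ n, Complex.exp (Complex.I * Δω * φ n ω))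
    (t : ℝ) (ht : 0 < t)
    (t₁ t₂ : ℝ)
    (ht₁ : t₁ = max |t + Real.sin (Δω * D) / (Δω * D)|
                    |-t + Real.sin (Δω * D) / (Δω * D)|)
    (ht₂ : t₂ = |t + (1 - Real.cos (Δω * D)) / (Δω * D)|) :
    P {ω | Real.sqrt (t₁ ^ 2 + t₂ ^ 2) ≤ ‖Q₀ ω‖} ≤
      ENNReal.ofReal (4 * Real.exp (-((N:ℝ) * t ^ 2) / 2)) := by
  have hΔω0 : 0 < Δω := lt_of_lt_of_le (by positivity) hΔω
  have hΔωD : 0 < Δω * D := mul_pos hΔω0 hD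
  set μ₁ : ℝ := Real.sin (Δω * D) / (Δω * D) with hμ₁_def
  set μ₂ : ℝ := (1 - Real.cos (Δω * D)) / (Δω * D) with hμ₂_def
  have hμ₂0 : 0 ≤ μ₂ := div_nonneg (by linarith [Real.cos_le_one (Δω * D)]) hΔωD.le
  set Xc : Fin N → Ω → ℝ := fun n ω => Real.cos (Δω * φ n ω) with hXc_def
  set Xs : Fin N → Ω → ℝ := fun n ω => Real.sin (Δω * φ n ω) with hXs_def
  have hmc : ∀ n, Measurable (Xc n) :=
    fun n => Real.measurable_cos.comp ((hmeas n).const_mul Δω)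
  have hms : ∀ n, Measurable (Xs n) :=
    fun n => Real.measurable_sin.comp ((hmeas n).const_mul Δω)
  have hbc : ∀ n ω, Xc n ω ∈ Set.Icc (-1:ℝ) 1 :=
    fun n ω => ⟨Real.neg_one_le_cos _, Real.cos_le_one _⟩
  have hbs : ∀ n ω, Xs n ω ∈ Set.Icc (-1:ℝ) 1 :=
    fun n ω => ⟨Real.neg_one_le_sin _, Real.sin_le_one _⟩
  have hbcn : ∀ n ω, (-Xc n) ω ∈ Set.Icc (-1:ℝ) 1 := by
    intro n ω
    simp only [Pi.neg_apply, Set.mem_Icc]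
    constructor <;> [linarith [(hbc n ω).2]; linarith [(hbc n ω).1]]
  have hbsn : ∀ n ω, (-Xs n) ω ∈ Set.Icc (-1:ℝ) 1 := by
    intro n ω
    simp only [Pi.neg_apply, Set.mem_Icc]
    constructor <;> [linarith [(hbs n ω).2]; linarith [(hbs n ω).1]]
  have hic : iIndepFun Xc P :=
    hindep.comp (fun _ x => Real.cos (Δω * x))
      (fun _ => Real.measurable_cos.comp (measurable_id.const_mul Δω))
  have his : iIndepFun Xs P :=
    hindep.comp (fun _ x => Real.sin (Δω * x))
      (fun _ => Real.measurable_sin.comp (measurable_id.const_mul Δω))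
  have hicn : iIndepFun (fun n => -Xc n) P :=
    hindep.comp (fun _ x => -Real.cos (Δω * x))
      (fun _ => (Real.measurable_cos.comp (measurable_id.const_mul Δω)).neg)
  have hisn : iIndepFun (fun n => -Xs n) P :=
    hindep.comp (fun _ x => -Real.sin (Δω * x))
      (fun _ => (Real.measurable_sin.comp (measurable_id.const_mul Δω)).neg)
  -- means
  have hmeanc : ∀ n, ∫ ω, Xc n ω ∂P = μ₁ := by
    intro n
    rw [hXc_def]
    rw [unif_integral P D hD (φ n) (hmeas n) (hunif n) (fun x => Real.cos (Δω * x))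
      (Real.measurable_cos.comp (measurable_id.const_mul Δω))]
    rw [intervalIntegral.integral_comp_mul_left (fun x => Real.cos x) hΔω0.ne']
    rw [integral_cos]
    simp only [mul_zero, Real.sin_zero, sub_zero, smul_eq_mul]
    rw [hμ₁_def]
    field_simp
  have hmeans : ∀ n, ∫ ω, Xs n ω ∂P = μ₂ := by
    intro n
    rw [hXs_def]
    rw [unif_integral P D hD (φ n) (hmeas n) (hunif n) (fun x => Real.sin (Δω * x))
      (Real.measurable_sin.comp (measurable_id.const_mul Δω))]
    rw [intervalIntegral.integral_comp_mul_left (fun x => Real.sin x) hΔω0.ne']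
    rw [integral_sin]
    simp only [mul_zero, Real.cos_zero, smul_eq_mul]
    rw [hμ₂_def]
    field_simp
  -- real and imaginary parts of Q₀
  have hRe : ∀ ω, (Q₀ ω).re = (1 / (N:ℝ)) * ∑ n, Xc n ω := by
    intro ω
    rw [hQ₀ ω]
    have h1 : ∀ n : Fin N, Complex.I * (Δω:ℂ) * (φ n ω : ℂ)
        = ((Δω * φ n ω : ℝ) : ℂ) * Complex.I := by
      intro n; push_cast; ring
    simp_rw [h1]
    have h2 : (1 / (N:ℂ)) = (((1 / N : ℝ)) : ℂ) := by push_cast; ring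
    rw [h2, Complex.re_ofReal_mul, Complex.re_sum]
    rw [Finset.sum_congr rfl (fun n _ => Complex.exp_ofReal_mul_I_re (Δω * φ n ω))]
  have hIm : ∀ ω, (Q₀ ω).im = (1 / (N:ℝ)) * ∑ n, Xs n ω := by
    intro ω
    rw [hQ₀ ω]
    have h1 : ∀ n : Fin N, Complex.I * (Δω:ℂ) * (φ n ω : ℂ)
        = ((Δω * φ n ω : ℝ) : ℂ) * Complex.I := by
      intro n; push_cast; ring
    simp_rw [h1]
    have h2 : (1 / (N:ℂ)) = (((1 / N : ℝ)) : ℂ) := by push_cast; ring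
    rw [h2, Complex.im_ofReal_mul, Complex.im_sum]
    rw [Finset.sum_congr rfl (fun n _ => Complex.exp_ofReal_mul_I_im (Δω * φ n ω))]
  -- t facts
  have hNpos : (0:ℝ) < N := by exact_mod_cast hN
  have ht₁a : t + μ₁ ≤ t₁ := ht₁ ▸ le_trans (le_abs_self _) (le_max_left _ _)
  have ht₁b : t - μ₁ ≤ t₁ := by
    rw [ht₁]
    refine le_trans ?_ (le_max_right _ _)
    rw [← abs_neg]
    refine le_trans ?_ (le_abs_self _)
    rw [hμ₁_def]; ring_nf; rfl
  have ht₂a : t + μ₂ ≤ t₂ := ht₂ ▸ le_abs_self _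
  have ht₂b : t - μ₂ ≤ t₂ := le_trans (by linarith) ht₂a
  have ht₁0 : 0 ≤ t₁ := ht₁ ▸ le_trans (abs_nonneg _) (le_max_left _ _)
  have ht₂0 : 0 ≤ t₂ := ht₂ ▸ abs_nonneg _
  -- the four tail events
  set ε₁ : ℝ := (N:ℝ) * μ₁ + N * t with hε₁_def
  set ε₂ : ℝ := (N:ℝ) * (-μ₁) + N * t with hε₂_def
  set ε₃ : ℝ := (N:ℝ) * μ₂ + N * t with hε₃_def
  set ε₄ : ℝ := (N:ℝ) * (-μ₂) + N * t with hε₄_def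
  have hsub : {ω | Real.sqrt (t₁ ^ 2 + t₂ ^ 2) ≤ ‖Q₀ ω‖} ⊆
      ({ω | ε₁ ≤ (∑ n, Xc n) ω} ∪ {ω | ε₂ ≤ (∑ n, fun ω' => -Xc n ω') ω}) ∪
      ({ω | ε₃ ≤ (∑ n, Xs n) ω} ∪ {ω | ε₄ ≤ (∑ n, fun ω' => -Xs n ω') ω}) := by
    intro ω hω
    simp only [Set.mem_setOf_eq] at hω
    have hsq : t₁ ^ 2 + t₂ ^ 2 ≤ (Q₀ ω).re ^ 2 + (Q₀ ω).im ^ 2 := by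
      have h1 : t₁ ^ 2 + t₂ ^ 2 = Real.sqrt (t₁ ^ 2 + t₂ ^ 2) ^ 2 :=
        (Real.sq_sqrt (by positivity)).symm
      have h2 : Real.sqrt (t₁ ^ 2 + t₂ ^ 2) ^ 2 ≤ ‖Q₀ ω‖ ^ 2 := by
        apply pow_le_pow_left₀ (Real.sqrt_nonneg _) hω
      rw [h1]
      refine h2.trans ?_
      rw [Complex.sq_norm, Complex.normSq_apply]
      ring_nf
      exact le_refl _
    have hre := hRe ω
    have him := hIm ω
    have hsumc : ∑ n, Xc n ω = (N:ℝ) * (Q₀ ω).re := by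
      rw [hre]; field_simp
    have hsums : ∑ n, Xs n ω = (N:ℝ) * (Q₀ ω).im := by
      rw [him]; field_simp
    have hcases : t₁ ≤ (Q₀ ω).re ∨ t₁ ≤ -(Q₀ ω).re ∨ t₂ ≤ (Q₀ ω).im ∨ t₂ ≤ -(Q₀ ω).im := by
      by_contra hcon
      push_neg at hcon
      obtain ⟨h1, h2, h3, h4⟩ := hcon
      nlinarith
    have hsum_apply_c : (∑ n, Xc n) ω = ∑ n, Xc n ω := by simp
    have hsum_apply_cn : (∑ n, fun ω' => -Xc n ω') ω = -∑ n, Xc n ω := by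
      simp [Finset.sum_neg_distrib]
    have hsum_apply_s : (∑ n, Xs n) ω = ∑ n, Xs n ω := by simp
    have hsum_apply_sn : (∑ n, fun ω' => -Xs n ω') ω = -∑ n, Xs n ω := by
      simp [Finset.sum_neg_distrib]
    rcases hcases with h | h | h | h
    · left; left
      simp only [Set.mem_setOf_eq, hsum_apply_c, hsumc, hε₁_def]
      calc (N:ℝ) * μ₁ + N * t = (N:ℝ) * (μ₁ + t) := by ring
        _ ≤ (N:ℝ) * (Q₀ ω).re := mul_le_mul_of_nonneg_left (by linarith) hNpos.le
    · left; right
      simp only [Set.mem_setOf_eq, hsum_apply_cn, hsumc, hε₂_def]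
      calc (N:ℝ) * (-μ₁) + N * t = (N:ℝ) * (t - μ₁) := by ring
        _ ≤ (N:ℝ) * (-(Q₀ ω).re) := mul_le_mul_of_nonneg_left (by linarith) hNpos.le
        _ = -((N:ℝ) * (Q₀ ω).re) := by ring
    · right; left
      simp only [Set.mem_setOf_eq, hsum_apply_s, hsums, hε₃_def]
      calc (N:ℝ) * μ₂ + N * t = (N:ℝ) * (μ₂ + t) := by ring
        _ ≤ (N:ℝ) * (Q₀ ω).im := mul_le_mul_of_nonneg_left (by linarith) hNpos.le
    · right; right
      simp only [Set.mem_setOf_eq, hsum_apply_sn, hsums, hε₄_def]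
      calc (N:ℝ) * (-μ₂) + N * t = (N:ℝ) * (t - μ₂) := by ring
        _ ≤ (N:ℝ) * (-(Q₀ ω).im) := mul_le_mul_of_nonneg_left (by linarith) hNpos.le
        _ = -((N:ℝ) * (Q₀ ω).im) := by ring
  -- tail bounds
  have hT1 : P {ω | ε₁ ≤ (∑ n, Xc n) ω} ≤ ENNReal.ofReal (Real.exp (-((N:ℝ) * t ^ 2) / 2)) := by
    apply hoeffding_tail P N Xc hmc hbc hic t ε₁ ht
    rw [hε₁_def]
    apply le_of_eq
    simp [hmeanc]
  have hT2 : P {ω | ε₂ ≤ (∑ n, fun ω' => -Xc n ω') ω} ≤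
      ENNReal.ofReal (Real.exp (-((N:ℝ) * t ^ 2) / 2)) := by
    apply hoeffding_tail P N (fun n ω' => -Xc n ω') (fun n => (hmc n).neg)
      (fun n ω' => hbcn n ω') hicn t ε₂ ht
    rw [hε₂_def]
    apply le_of_eq
    simp [integral_neg, hmeanc]
  have hT3 : P {ω | ε₃ ≤ (∑ n, Xs n) ω} ≤ ENNReal.ofReal (Real.exp (-((N:ℝ) * t ^ 2) / 2)) := by
    apply hoeffding_tail P N Xs hms hbs his t ε₃ ht
    rw [hε₃_def]
    apply le_of_eq
    simp [hmeans]
  have hT4 : P {ω | ε₄ ≤ (∑ n, fun ω' => -Xs n ω') ω} ≤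
      ENNReal.ofReal (Real.exp (-((N:ℝ) * t ^ 2) / 2)) := by
    apply hoeffding_tail P N (fun n ω' => -Xs n ω') (fun n => (hms n).neg)
      (fun n ω' => hbsn n ω') hisn t ε₄ ht
    rw [hε₄_def]
    apply le_of_eq
    simp [integral_neg, hmeans]
  calc P {ω | Real.sqrt (t₁ ^ 2 + t₂ ^ 2) ≤ ‖Q₀ ω‖}
      ≤ P (({ω | ε₁ ≤ (∑ n, Xc n) ω} ∪ {ω | ε₂ ≤ (∑ n, fun ω' => -Xc n ω') ω}) ∪
          ({ω | ε₃ ≤ (∑ n, Xs n) ω} ∪ {ω | ε₄ ≤ (∑ n, fun ω' => -Xs n ω') ω})) :=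
        measure_mono hsub
    _ ≤ (P {ω | ε₁ ≤ (∑ n, Xc n) ω} + P {ω | ε₂ ≤ (∑ n, fun ω' => -Xc n ω') ω}) +
        (P {ω | ε₃ ≤ (∑ n, Xs n) ω} + P {ω | ε₄ ≤ (∑ n, fun ω' => -Xs n ω') ω}) := by
        refine le_trans (measure_union_le _ _) ?_
        exact add_le_add (measure_union_le _ _) (measure_union_le _ _)
    _ ≤ (ENNReal.ofReal (Real.exp (-((N:ℝ) * t ^ 2) / 2)) +
          ENNReal.ofReal (Real.exp (-((N:ℝ) * t ^ 2) / 2))) +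
        (ENNReal.ofReal (Real.exp (-((N:ℝ) * t ^ 2) / 2)) +
          ENNReal.ofReal (Real.exp (-((N:ℝ) * t ^ 2) / 2))) :=
        add_le_add (add_le_add hT1 hT2) (add_le_add hT3 hT4)
    _ = ENNReal.ofReal (4 * Real.exp (-((N:ℝ) * t ^ 2) / 2)) := by
        have he : (0:ℝ) ≤ Real.exp (-((N:ℝ) * t ^ 2) / 2) := (Real.exp_pos _).le
        rw [← ENNReal.ofReal_add he he, ← ENNReal.ofReal_add (by linarith) (by linarith)]
        congr 1
        ring
end

section
/- Let N be a positive integer, φ₁, …, φ_N nonnegative real numbers, ω₁, ω₂ real with Δω = ω₂ − ω₁, and s₁, s₂ ∈ ℂ. Define a₁, a₂ ∈ ℂ^N by (a_l)_n = exp(i·ω_l·φₙ), A the N×2 matrix with columns a₁, a₂, and the N×2 matrix 𝐃 with columns (i·φₙ·exp(i·ω₁·φₙ)·s₁)ₙ and (i·φₙ·exp(i·ω₂·φₙ)·s₂)ₙ. For ι = 0, 1, 2 set Q_ι = (Σₙ φₙ^ι·exp(i·Δω·φₙ))/(Σₙ φₙ^ι), assume Σₙ φₙ ≠ 0, Σₙ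 φₙ² ≠ 0, and |Q₀| < 1, and set γ₀ = (Σₙ φₙ)²/(N·(1 − |Q₀|²)), Π = I_N − A·(AᴴA)⁻¹·Aᴴ, and F = Re( 𝐃ᴴ·Π·𝐃 ) (entrywise real part of a 2×2 matrix). Then F = Re( (F₁ + F₂ + F₃) ⊙ S ), where F₁ = (Σₙ φₙ²)·[[1, Q₂], [conj(Q₂), 1]], F₂ = −γ₀·[[1 + |Q₁|², 2·Q₁], [2·conj(Q₁), 1 + |Q₁|²]], F₃ = γ₀·[[Q₀·conj(Q₁) + conj(Q₀)·Q₁, conj(Q₀)·Q₁·Q₁ + Q₀], [Q₀·conj(Q₁)·conj(Q₁) + conj(Q₀), Q₀·conj(Q₁) + conj(Q₀)·Q₁]], S = [[|s₁|², conj(s₁)·s₂], [conj(s₂)·s₁, |s₂|²]], and ⊙ denotes the entrywise (Hadamard) product. -/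
open Matrix
open scoped Matrix ComplexConjugate

set_option maxHeartbeats 2000000

/-- Equations (79)–(82) of the paper (single snapshot): the Fisher-information-type
matrix `F = Re(𝐃ᴴ·Π_A^⊥·𝐃)` of the two-source direction-finding model can be
written as `F = Re((F₁ + F₂ + F₃) ⊙ S)`, so it depends on the separation `Δω`
only through the intermediate quantities `Q₀, Q₁, Q₂`. -/
theorem fisher_matrix_via_Q (N : ℕ) (hN : 0 < N) (φ : Fin N → ℝ)
    (hφ : ∀ n, 0 ≤ φ n) (ω₁ ω₂ Δω : ℝ) (hΔω : Δω = ω₂ - ω₁) (s₁ s₂ : ℂ)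
    (A Dmat : Matrix (Fin N) (Fin 2) ℂ)
    (hA : ∀ n, A n 0 = Complex.exp (Complex.I * ω₁ * φ n) ∧
               A n 1 = Complex.exp (Complex.I * ω₂ * φ n))
    (hD : ∀ n, Dmat n 0 = Complex.I * φ n * Complex.exp (Complex.I * ω₁ * φ n) * s₁ ∧
               Dmat n 1 = Complex.I * φ n * Complex.exp (Complex.I * ω₂ * φ n) * s₂)
    (Q₀ Q₁ Q₂ : ℂ)
    (hQ₀ : Q₀ = (∑ n, Complex.exp (Complex.I * Δω * φ n)) / (N : ℂ))
    (hQ₁ : Q₁ = (∑ n, (φ n : ℂ) * Complex.exp (Complex.I * Δω * φ n)) /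
        ((∑ n, φ n : ℝ) : ℂ))
    (hQ₂ : Q₂ = (∑ n, (φ n : ℂ) ^ 2 * Complex.exp (Complex.I * Δω * φ n)) /
        ((∑ n, (φ n) ^ 2 : ℝ) : ℂ))
    (hsum1 : (∑ n, φ n) ≠ 0) (hsum2 : (∑ n, (φ n) ^ 2) ≠ 0)
    (hQ : ‖Q₀‖ < 1)
    (γ₀ : ℝ) (hγ₀ : γ₀ = (∑ n, φ n) ^ 2 / ((N : ℝ) * (1 - ‖Q₀‖ ^ 2)))
    (Proj : Matrix (Fin N) (Fin N) ℂ) (hProj : Proj = 1 - A * (Aᴴ * A)⁻¹ * Aᴴ)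
    (F : Matrix (Fin 2) (Fin 2) ℝ) (hF : F = (Dmatᴴ * Proj * Dmat).map Complex.re)
    (F₁ F₂ F₃ S : Matrix (Fin 2) (Fin 2) ℂ)
    (hF₁ : F₁ = ((∑ n, (φ n) ^ 2 : ℝ) : ℂ) • !![1, Q₂; starRingEnd ℂ Q₂, 1])
    (hF₂ : F₂ = -((γ₀ : ℂ) •
        !![1 + (‖Q₁‖ : ℂ) ^ 2, 2 * Q₁;
           2 * starRingEnd ℂ Q₁, 1 + (‖Q₁‖ : ℂ) ^ 2]))
    (hF₃ : F₃ = (γ₀ : ℂ) •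
        !![Q₀ * starRingEnd ℂ Q₁ + starRingEnd ℂ Q₀ * Q₁,
           starRingEnd ℂ Q₀ * Q₁ * Q₁ + Q₀;
           Q₀ * starRingEnd ℂ Q₁ * starRingEnd ℂ Q₁ + starRingEnd ℂ Q₀,
           Q₀ * starRingEnd ℂ Q₁ + starRingEnd ℂ Q₀ * Q₁])
    (hS : S = !![(‖s₁‖ : ℂ) ^ 2, starRingEnd ℂ s₁ * s₂;
                 starRingEnd ℂ s₂ * s₁, (‖s₂‖ : ℂ) ^ 2]) :
    F = (Matrix.hadamard (F₁ + F₂ + F₃) S).map Complex.re := by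
  set c : ℂ := ∑ n, Complex.exp (Complex.I * Δω * φ n) with hc
  set T : ℂ := ∑ n, (φ n : ℂ) * Complex.exp (Complex.I * Δω * φ n) with hT
  set Rr : ℂ := ∑ n, (φ n : ℂ)^2 * Complex.exp (Complex.I * Δω * φ n) with hRr
  set P : ℂ := ((∑ n, φ n : ℝ) : ℂ) with hP
  set P2 : ℂ := ((∑ n, (φ n)^2 : ℝ) : ℂ) with hP2
  -- pointwise exponential identities
  have key : ∀ x : ℝ, conj (Complex.exp (Complex.I*ω₁*x)) * Complex.exp (Complex.I*ω₂*x)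
      = Complex.exp (Complex.I*Δω*x) := fun x => by
    rw [← Complex.exp_conj, ← Complex.exp_add]
    congr 1
    rw [_root_.map_mul, _root_.map_mul, Complex.conj_I, Complex.conj_ofReal,
      Complex.conj_ofReal]
    push_cast [hΔω]; ring
  have key1 : ∀ (ω : ℝ) (x : ℝ),
      conj (Complex.exp (Complex.I*ω*x)) * Complex.exp (Complex.I*ω*x) = 1 := fun ω x => by
    rw [← Complex.exp_conj, ← Complex.exp_add,
      show conj (Complex.I*(ω:ℂ)*(x:ℂ)) + Complex.I*ω*x = 0 by
        rw [_root_.map_mul, _root_.map_mul, Complex.conj_I, Complex.conj_ofReal,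
          Complex.conj_ofReal]; ring,
      Complex.exp_zero]
  have key' : ∀ x : ℝ, conj (Complex.exp (Complex.I*ω₂*x)) * Complex.exp (Complex.I*ω₁*x)
      = conj (Complex.exp (Complex.I*Δω*x)) := fun x => by
    rw [← key x, _root_.map_mul, Complex.conj_conj, mul_comm]
  -- conjugates of the sums
  have hTc : conj T = ∑ n, (φ n : ℂ) * conj (Complex.exp (Complex.I*Δω*φ n)) := by
    rw [hT, map_sum]
    exact Finset.sum_congr rfl fun n _ => by
      rw [_root_.map_mul, Complex.conj_ofReal]
  have hRc : conj Rr = ∑ n, (φ n : ℂ)^2 * conj (Complex.exp (Complex.I*Δω*φ n)) := by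
    rw [hRr, map_sum]
    exact Finset.sum_congr rfl fun n _ => by
      rw [_root_.map_mul, map_pow, Complex.conj_ofReal]
  -- A^H A
  have hM : Aᴴ * A = !![(N:ℂ), c; conj c, (N:ℂ)] := by
    ext i j
    rw [Matrix.mul_apply]
    simp only [conjTranspose_apply]
    fin_cases i <;> fin_cases j
    · simpa using (Finset.sum_congr rfl (fun n _ => by rw [(hA n).1, key1 ω₁ (φ n)]) :
        ∑ n, conj (A n 0) * A n 0 = ∑ _n : Fin N, (1:ℂ))
    · simpa using (Finset.sum_congr rfl (fun n _ => by rw [(hA n).1, (hA n).2, key (φ n)]) :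
        ∑ n, conj (A n 0) * A n 1 = ∑ n, Complex.exp (Complex.I*Δω*φ n))
    · rw [show conj c = ∑ n, conj (Complex.exp (Complex.I*Δω*φ n)) from map_sum _ _ _]
      simpa using (Finset.sum_congr rfl (fun n _ => by rw [(hA n).2, (hA n).1, key' (φ n)]) :
        ∑ n, conj (A n 1) * A n 0 = ∑ n, conj (Complex.exp (Complex.I*Δω*φ n)))
    · simpa using (Finset.sum_congr rfl (fun n _ => by rw [(hA n).2, key1 ω₂ (φ n)]) :
        ∑ n, conj (A n 1) * A n 1 = ∑ _n : Fin N, (1:ℂ))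
  -- A^H D entry sums
  have b00 : ∑ n, conj (A n 0) * Dmat n 0 = Complex.I*P*s₁ := by
    have e : ∀ n : Fin N, conj (A n 0) * Dmat n 0 = Complex.I*s₁*(φ n : ℂ) := fun n => by
      rw [(hA n).1, (hD n).1]
      linear_combination (Complex.I * (φ n:ℂ) * s₁) * key1 ω₁ (φ n)
    rw [Finset.sum_congr rfl fun n _ => e n, ← Finset.mul_sum, hP]
    push_cast; ring
  have b01 : ∑ n, conj (A n 0) * Dmat n 1 = Complex.I*T*s₂ := by
    have e : ∀ n : Fin N, conj (A n 0) * Dmat n 1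
        = Complex.I*s₂*((φ n : ℂ) * Complex.exp (Complex.I*Δω*φ n)) := fun n => by
      rw [(hA n).1, (hD n).2]
      linear_combination (Complex.I * (φ n:ℂ) * s₂) * key (φ n)
    rw [Finset.sum_congr rfl fun n _ => e n, ← Finset.mul_sum, ← hT]; ring
  have b10 : ∑ n, conj (A n 1) * Dmat n 0 = Complex.I*(conj T)*s₁ := by
    have e : ∀ n : Fin N, conj (A n 1) * Dmat n 0
        = Complex.I*s₁*((φ n : ℂ) * conj (Complex.exp (Complex.I*Δω*φ n))) := fun n => by
      rw [(hA n).2, (hD n).1]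
      linear_combination (Complex.I * (φ n:ℂ) * s₁) * key' (φ n)
    rw [Finset.sum_congr rfl fun n _ => e n, ← Finset.mul_sum, ← hTc]; ring
  have b11 : ∑ n, conj (A n 1) * Dmat n 1 = Complex.I*P*s₂ := by
    have e : ∀ n : Fin N, conj (A n 1) * Dmat n 1 = Complex.I*s₂*(φ n : ℂ) := fun n => by
      rw [(hA n).2, (hD n).2]
      linear_combination (Complex.I * (φ n:ℂ) * s₂) * key1 ω₂ (φ n)
    rw [Finset.sum_congr rfl fun n _ => e n, ← Finset.mul_sum, hP]
    push_cast; ring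
  have hB : Aᴴ * Dmat =
      !![Complex.I*P*s₁, Complex.I*T*s₂; Complex.I*(conj T)*s₁, Complex.I*P*s₂] := by
    ext i j
    rw [Matrix.mul_apply]
    simp only [conjTranspose_apply]
    fin_cases i <;> fin_cases j
    · simpa using b00
    · simpa using b01
    · simpa using b10
    · simpa using b11
  -- D^H D entry sums
  have d00 : ∑ n, conj (Dmat n 0) * Dmat n 0 = P2 * (conj s₁ * s₁) := by
    have e : ∀ n : Fin N, conj (Dmat n 0) * Dmat n 0
        = (φ n : ℂ)^2 * (conj s₁ * s₁) := fun n => by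
      rw [(hD n).1]
      simp only [_root_.map_mul, Complex.conj_I, Complex.conj_ofReal]
      linear_combination ((φ n:ℂ)^2 * (conj s₁ * s₁)) * key1 ω₁ (φ n)
        - ((φ n:ℂ)^2 * (conj s₁ * s₁) * conj (Complex.exp (Complex.I*ω₁*φ n))
            * Complex.exp (Complex.I*ω₁*φ n)) * Complex.I_sq
    rw [Finset.sum_congr rfl fun n _ => e n, ← Finset.sum_mul, hP2]
    push_cast; ring
  have d01 : ∑ n, conj (Dmat n 0) * Dmat n 1 = Rr * (conj s₁ * s₂) := by
    have e : ∀ n : Fin N, conj (Dmat n 0) * Dmat n 1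
        = ((φ n : ℂ)^2 * Complex.exp (Complex.I*Δω*φ n)) * (conj s₁ * s₂) := fun n => by
      rw [(hD n).1, (hD n).2]
      simp only [_root_.map_mul, Complex.conj_I, Complex.conj_ofReal]
      linear_combination ((φ n:ℂ)^2 * (conj s₁ * s₂)) * key (φ n)
        - ((φ n:ℂ)^2 * (conj s₁ * s₂) * conj (Complex.exp (Complex.I*ω₁*φ n))
            * Complex.exp (Complex.I*ω₂*φ n)) * Complex.I_sq
    rw [Finset.sum_congr rfl fun n _ => e n, ← Finset.sum_mul, ← hRr]
  have d10 : ∑ n, conj (Dmat n 1) * Dmat n 0 = conj Rr * (conj s₂ * s₁) := by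
    have e : ∀ n : Fin N, conj (Dmat n 1) * Dmat n 0
        = ((φ n : ℂ)^2 * conj (Complex.exp (Complex.I*Δω*φ n))) * (conj s₂ * s₁) := fun n => by
      rw [(hD n).1, (hD n).2]
      simp only [_root_.map_mul, Complex.conj_I, Complex.conj_ofReal]
      linear_combination ((φ n:ℂ)^2 * (conj s₂ * s₁)) * key' (φ n)
        - ((φ n:ℂ)^2 * (conj s₂ * s₁) * conj (Complex.exp (Complex.I*ω₂*φ n))
            * Complex.exp (Complex.I*ω₁*φ n)) * Complex.I_sq
    rw [Finset.sum_congr rfl fun n _ => e n, ← Finset.sum_mul, ← hRc]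
  have d11 : ∑ n, conj (Dmat n 1) * Dmat n 1 = P2 * (conj s₂ * s₂) := by
    have e : ∀ n : Fin N, conj (Dmat n 1) * Dmat n 1
        = (φ n : ℂ)^2 * (conj s₂ * s₂) := fun n => by
      rw [(hD n).2]
      simp only [_root_.map_mul, Complex.conj_I, Complex.conj_ofReal]
      linear_combination ((φ n:ℂ)^2 * (conj s₂ * s₂)) * key1 ω₂ (φ n)
        - ((φ n:ℂ)^2 * (conj s₂ * s₂) * conj (Complex.exp (Complex.I*ω₂*φ n))
            * Complex.exp (Complex.I*ω₂*φ n)) * Complex.I_sq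
    rw [Finset.sum_congr rfl fun n _ => e n, ← Finset.sum_mul, hP2]
    push_cast; ring
  have hDD : Dmatᴴ * Dmat =
      !![P2 * (conj s₁ * s₁), Rr * (conj s₁ * s₂);
         conj Rr * (conj s₂ * s₁), P2 * (conj s₂ * s₂)] := by
    ext i j
    rw [Matrix.mul_apply]
    simp only [conjTranspose_apply]
    fin_cases i <;> fin_cases j
    · simpa using d00
    · simpa using d01
    · simpa using d10
    · simpa using d11
  -- nonvanishing facts
  have hNR : ((N:ℝ)) ≠ 0 := Nat.cast_ne_zero.mpr hN.ne'
  have hNC : ((N:ℂ)) ≠ 0 := Nat.cast_ne_zero.mpr hN.ne'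
  have hPne : P ≠ 0 := by rw [hP]; exact_mod_cast hsum1
  have hP2ne : P2 ≠ 0 := by rw [hP2]; exact_mod_cast hsum2
  have habs : ‖Q₀‖ = ‖c‖ / N := by
    rw [hQ₀, norm_div, Complex.norm_natCast]
  have habslt : ‖c‖ < N := by
    have := hQ
    rw [habs, div_lt_one (by exact_mod_cast hN : (0:ℝ) < N)] at this
    exact this
  have hdpos : (0:ℝ) < (N:ℝ)*(N:ℝ) - (‖c‖)^2 := by
    nlinarith [norm_nonneg c]
  have hcc : c * conj c = (((‖c‖)^2 : ℝ) : ℂ) := by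
    push_cast; exact_mod_cast Complex.mul_conj' c
  have hdC : ((N:ℂ)*(N:ℂ) - c * conj c) ≠ 0 := by
    rw [hcc, show ((N:ℂ)*(N:ℂ) : ℂ) = (((N:ℝ)*(N:ℝ) : ℝ) : ℂ) by push_cast; ring,
      ← Complex.ofReal_sub]
    exact_mod_cast hdpos.ne'
  -- γ₀ as a rational expression
  have hγr : γ₀ = (∑ n, φ n)^2 * N / ((N:ℝ)*(N:ℝ) - (‖c‖)^2) := by
    have h1 : (N:ℝ)*(1 - (‖c‖ / N)^2) = ((N:ℝ)*(N:ℝ) - (‖c‖)^2)/N := by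
      field_simp
    rw [hγ₀, habs, h1, div_div_eq_mul_div]
  have hγc : (γ₀ : ℂ) = P^2 * N / ((N:ℂ)*(N:ℂ) - c * conj c) := by
    rw [hγr, hcc, hP]
    push_cast
    ring
  -- the inverse
  have hMinv : (Aᴴ * A)⁻¹ = ((N:ℂ)*(N:ℂ) - c * conj c)⁻¹ •
      !![(N:ℂ), -c; -(conj c), (N:ℂ)] := by
    rw [hM, Matrix.inv_def, Matrix.adjugate_fin_two, Matrix.det_fin_two_of,
      Ring.inverse_eq_inv'] <;> (try congr 1) <;> (try simp)
  -- expand D^H Proj D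
  have expand : Dmatᴴ * Proj * Dmat
      = Dmatᴴ * Dmat - (Aᴴ * Dmat)ᴴ * ((Aᴴ * A)⁻¹ * (Aᴴ * Dmat)) := by
    rw [hProj]
    simp only [Matrix.mul_sub, Matrix.sub_mul, Matrix.mul_one, Matrix.one_mul,
      conjTranspose_mul, conjTranspose_conjTranspose, Matrix.mul_assoc]
  -- main complex identity
  have hc' : c = (N:ℂ) * Q₀ := by rw [hQ₀]; field_simp
  have hT' : T = P * Q₁ := by rw [hQ₁]; field_simp
  have hR' : Rr = P2 * Q₂ := by rw [hQ₂]; field_simp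
  have hPc : conj P = P := by rw [hP]; exact Complex.conj_ofReal _
  have hP2c : conj P2 = P2 := by rw [hP2]; exact Complex.conj_ofReal _
  have hd2 : ((N:ℂ)*(N:ℂ) - ((N:ℂ)*Q₀) * conj ((N:ℂ)*Q₀)) ≠ 0 := by
    rw [← hc']; exact hdC
  have hγ2 : (γ₀ : ℂ) = P^2 * N / ((N:ℂ)*(N:ℂ) - ((N:ℂ)*Q₀) * conj ((N:ℂ)*Q₀)) := by
    rw [← hc']; exact hγc
  have main : Dmatᴴ * Proj * Dmat = Matrix.hadamard (F₁ + F₂ + F₃) S := by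
    rw [expand, hDD, hMinv, hB, hF₁, hF₂, hF₃, hS, hγ2, hc', hT', hR']
    have habs1 : ((‖Q₁‖ : ℝ) : ℂ)^2 = Q₁ * conj Q₁ := by
      exact_mod_cast (Complex.mul_conj' Q₁).symm
    have habss1 : ((‖s₁‖ : ℝ) : ℂ)^2 = s₁ * conj s₁ := by
      exact_mod_cast (Complex.mul_conj' s₁).symm
    have habss2 : ((‖s₂‖ : ℝ) : ℂ)^2 = s₂ * conj s₂ := by
      exact_mod_cast (Complex.mul_conj' s₂).symm
    ext i j
    fin_cases i <;> fin_cases j <;>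
      simp only [Fin.zero_eta, Fin.mk_one, Fin.isValue, Matrix.sub_apply,
        Matrix.mul_apply, Matrix.smul_apply, Matrix.conjTranspose_apply,
        Matrix.hadamard_apply, Matrix.add_apply, Matrix.of_apply, Matrix.neg_apply, Fin.sum_univ_two,
        Matrix.cons_val', Matrix.cons_val_zero, Matrix.cons_val_one, Matrix.head_cons,
        Matrix.head_fin_const, Matrix.empty_val', Matrix.cons_val_fin_one,
        smul_eq_mul, Complex.star_def, habs1, habss1, habss2, _root_.map_mul,
        Complex.conj_I, Complex.conj_conj, map_natCast, hPc, hP2c, _root_.map_neg] <;>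
      · field_simp [hd2]
        ring_nf
        try simp only [Complex.I_sq, hPc, hP2c]
        try ring_nf
  rw [hF, main]
end
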